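/- arXiv:1912.01253 — 2 statements merged into one kernel-verified Lean document; each statement's English description precedes it below -/
import Mathlib

section
/- For every point a ∈ ℝ^n, the tropical convex hull of the ray pos(a) = {t·a : t ≥ 0} equals the set of all finite nonnegative linear combinations of points of tconv({0, a}); that is, tconv(pos(a)) = pos(tconv({0, a})), where pos(S) denotes the convex conical hull (all finite nonnegative combinations) of S. -/
/-- A set `U ⊆ ℝ^n` is tropically convex (min-plus convention). -/
def TropConvex {n : ℕ} (U : Set (Fin n → ℝ)) : Prop :=
  ∀ x ∈ U, ∀ y ∈ U, ∀ a b : ℝ, min a b = 0 →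
    (fun i => min (a + x i) (b + y i)) ∈ U

/-- The tropical convex hull: the intersection of all tropically convex sets containing `U`. -/
def tconv {n : ℕ} (U : Set (Fin n → ℝ)) : Set (Fin n → ℝ) :=
  ⋂₀ {V | TropConvex V ∧ U ⊆ V}

/-- The set of all finite nonnegative real linear combinations of elements of `S`. -/
def posHull {n : ℕ} (S : Set (Fin n → ℝ)) : Set (Fin n → ℝ) :=
  {x | ∃ (k : ℕ) (c : Fin k → ℝ) (v : Fin k → Fin n → ℝ),
    (∀ i, 0 ≤ c i) ∧ (∀ i, v i ∈ S) ∧ x = ∑ i, c i • v i}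


-- inf' helper lemmas
lemma const_add_inf' {ι : Type*} {F : Finset ι} (hF : F.Nonempty) (c : ℝ) (f : ι → ℝ) :
    c + F.inf' hF f = F.inf' hF (fun p => c + f p) := by
  apply le_antisymm
  · apply Finset.le_inf'
    intro b hb
    have := Finset.inf'_le f hb
    linarith
  · obtain ⟨i, hi, hEq⟩ := Finset.exists_mem_eq_inf' hF f
    calc F.inf' hF (fun p => c + f p) ≤ c + f i := Finset.inf'_le _ hi
      _ = c + F.inf' hF f := by rw [hEq]

lemma mul_inf' {ι : Type*} {F : Finset ι} (hF : F.Nonempty) {c : ℝ} (hc : 0 ≤ c) (f : ι → ℝ) :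
    c * F.inf' hF f = F.inf' hF (fun p => c * f p) := by
  apply le_antisymm
  · apply Finset.le_inf'
    intro b hb
    exact mul_le_mul_of_nonneg_left (Finset.inf'_le f hb) hc
  · obtain ⟨i, hi, hEq⟩ := Finset.exists_mem_eq_inf' hF f
    calc F.inf' hF (fun p => c * f p) ≤ c * f i := Finset.inf'_le _ hi
      _ = c * F.inf' hF f := by rw [hEq]

lemma inf'_add_inf' {ι κ : Type*} {F : Finset ι} {G : Finset κ} (hF : F.Nonempty)
    (hG : G.Nonempty) (f : ι → ℝ) (g : κ → ℝ) :
    F.inf' hF f + G.inf' hG g = (F ×ˢ G).inf' (hF.product hG) (fun p => f p.1 + g p.2) := by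
  apply le_antisymm
  · apply Finset.le_inf'
    intro b hb
    rw [Finset.mem_product] at hb
    exact add_le_add (Finset.inf'_le _ hb.1) (Finset.inf'_le _ hb.2)
  · obtain ⟨i, hi, hif⟩ := Finset.exists_mem_eq_inf' hF f
    obtain ⟨j, hj, hjg⟩ := Finset.exists_mem_eq_inf' hG g
    calc (F ×ˢ G).inf' (hF.product hG) (fun p => f p.1 + g p.2) ≤ f i + g j :=
          Finset.inf'_le _ (show (i, j) ∈ F ×ˢ G from Finset.mem_product.mpr ⟨hi, hj⟩)
      _ = _ := by rw [hif, hjg]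

-- basic tconv lemmas
lemma subset_tconv {n : ℕ} (U : Set (Fin n → ℝ)) : U ⊆ tconv U := by
  intro x hx
  intro V hV
  exact hV.2 hx

lemma tconv_subset {n : ℕ} {U V : Set (Fin n → ℝ)} (hV : TropConvex V) (hUV : U ⊆ V) :
    tconv U ⊆ V := fun x hx => hx V ⟨hV, hUV⟩

lemma tropConvex_tconv {n : ℕ} (U : Set (Fin n → ℝ)) : TropConvex (tconv U) := by
  intro x hx y hy α β h
  intro V hV
  exact hV.1 x (hx V hV) y (hy V hV) α β h

-- the generators lie in tconv {0, a}
lemma gen_mem {n : ℕ} (a : Fin n → ℝ) (b : ℝ) :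
    (fun i => min b (a i) - min b 0) ∈ tconv {(0 : Fin n → ℝ), a} := by
  intro V hV
  have h0 : (0 : Fin n → ℝ) ∈ V := hV.2 (Set.mem_insert _ _)
  have ha : a ∈ V := hV.2 (Set.mem_insert_of_mem _ rfl)
  rcases le_or_gt 0 b with hb | hb
  · have := hV.1 0 h0 a ha b 0 (min_eq_right hb)
    convert this using 1
    funext i
    simp [min_eq_right hb]
  · have := hV.1 0 h0 a ha 0 (-b) (min_eq_left (by linarith))
    convert this using 1
    funext i
    have h1 : min b 0 = b := min_eq_left hb.le
    have h2 : min b (a i) - b = min (b - b) (a i - b) := (min_sub_sub_right b (a i) b).symm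
    simp only [h1, h2, sub_self, Pi.zero_apply, add_zero, zero_add]
    congr 1
    ring

-- tropically convex sets are closed under finite tropical combinations
lemma trop_comb {n : ℕ} {V : Set (Fin n → ℝ)} (hV : TropConvex V) {ι : Type*}
    (v : ι → Fin n → ℝ) :
    ∀ (F : Finset ι) (hF : F.Nonempty) (γ : ι → ℝ),
      (∀ p ∈ F, 0 ≤ γ p) → (∃ p ∈ F, γ p = 0) → (∀ p ∈ F, v p ∈ V) →
      (fun i => F.inf' hF (fun p => γ p + v p i)) ∈ V := by
  intro F hF
  induction hF using Finset.Nonempty.cons_induction with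
  | singleton p0 =>
    intro γ _ hz hv
    obtain ⟨p1, hp1, hp1z⟩ := hz
    rw [Finset.mem_singleton] at hp1
    subst hp1
    have : (fun i => ({p1} : Finset ι).inf' (Finset.singleton_nonempty p1)
        (fun p => γ p + v p i)) = v p1 := by
      funext i
      simp [hp1z]
    rw [this]
    exact hv p1 (Finset.mem_singleton_self p1)
  | cons a0 s h hs ih =>
    intro γ hγ0 hz hv
    have hm0 : 0 ≤ s.inf' hs γ := Finset.le_inf' hs γ (fun b hb => hγ0 b (Finset.mem_cons_of_mem hb))
    set m := s.inf' hs γ with hm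
    have hy : (fun i => s.inf' hs (fun p => (γ p - m) + v p i)) ∈ V := by
      apply ih
      · intro p hp
        have := Finset.inf'_le γ hp
        simp only [← hm] at this ⊢
        linarith
      · obtain ⟨i, hi, hieq⟩ := Finset.exists_mem_eq_inf' hs γ
        exact ⟨i, hi, by rw [← hm] at hieq; linarith⟩
      · intro p hp
        exact hv p (Finset.mem_cons_of_mem hp)
    have hmin : min (γ a0) m = 0 := by
      obtain ⟨p0, hp0, hp0z⟩ := hz
      rw [Finset.mem_cons] at hp0
      have ha0 : 0 ≤ γ a0 := hγ0 a0 (Finset.mem_cons_self a0 s)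
      rcases hp0 with rfl | hp0
      · rw [hp0z]; exact min_eq_left hm0
      · have : m ≤ γ p0 := Finset.inf'_le γ hp0
        have : m = 0 := le_antisymm (by rw [← hp0z]; exact Finset.inf'_le γ hp0) hm0
        rw [this]; exact min_eq_right ha0
    have := hV (v a0) (hv a0 (Finset.mem_cons_self a0 s))
      (fun i => s.inf' hs (fun p => (γ p - m) + v p i)) hy (γ a0) m hmin
    convert this using 1
    funext i
    rw [Finset.inf'_cons hs]
    have : m + s.inf' hs (fun p => (γ p - m) + v p i)
        = s.inf' hs (fun p => γ p + v p i) := by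
      rw [const_add_inf']
      apply Finset.inf'_congr hs rfl
      intro p _
      ring
    rw [this]

-- the intermediate set M
def Mset (n : ℕ) (a : Fin n → ℝ) : Set (Fin n → ℝ) :=
  {x | ∃ (F : Finset (ℝ × ℝ)) (hF : F.Nonempty),
    (∀ p ∈ F, 0 ≤ p.1 ∧ 0 ≤ p.2) ∧ (∃ p ∈ F, p.1 = 0) ∧
    ∀ i, x i = F.inf' hF (fun p => p.1 + p.2 * a i)}

lemma smul_a_mem_Mset {n : ℕ} (a : Fin n → ℝ) {t : ℝ} (ht : 0 ≤ t) : t • a ∈ Mset n a := by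
  refine ⟨{((0 : ℝ), t)}, Finset.singleton_nonempty _, ?_, ⟨(0, t), Finset.mem_singleton_self _, rfl⟩, ?_⟩
  · intro p hp
    rw [Finset.mem_singleton] at hp
    subst hp
    exact ⟨le_refl 0, ht⟩
  · intro i
    simp

lemma zero_mem_Mset {n : ℕ} (a : Fin n → ℝ) : (0 : Fin n → ℝ) ∈ Mset n a := by
  have := smul_a_mem_Mset a (le_refl 0)
  simpa using this

lemma tropConvex_Mset {n : ℕ} (a : Fin n → ℝ) : TropConvex (Mset n a) := by
  classical
  rintro x ⟨F, hF, hFc, hFz, hFx⟩ y ⟨G, hG, hGc, hGz, hGy⟩ α β hαβ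
  have hα : 0 ≤ α := by rw [← hαβ]; exact min_le_left α β
  have hβ : 0 ≤ β := by rw [← hαβ]; exact min_le_right α β
  refine ⟨F.image (fun p => (α + p.1, p.2)) ∪ G.image (fun p => (β + p.1, p.2)),
    Finset.Nonempty.inr (hG.image _), ?_, ?_, ?_⟩
  · intro p hp
    rw [Finset.mem_union] at hp
    rcases hp with hp | hp <;> rw [Finset.mem_image] at hp <;> obtain ⟨q, hq, rfl⟩ := hp
    · exact ⟨add_nonneg hα (hFc q hq).1, (hFc q hq).2⟩
    · exact ⟨add_nonneg hβ (hGc q hq).1, (hGc q hq).2⟩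
  · rcases le_total α β with hle | hle
    · have hα0 : α = 0 := by rw [← hαβ]; exact (min_eq_left hle).symm
      obtain ⟨p0, hp0, hp0z⟩ := hFz
      exact ⟨(α + p0.1, p0.2), Finset.mem_union_left _ (Finset.mem_image_of_mem _ hp0),
        by simp [hα0, hp0z]⟩
    · have hβ0 : β = 0 := by rw [← hαβ]; exact (min_eq_right hle).symm
      obtain ⟨p0, hp0, hp0z⟩ := hGz
      exact ⟨(β + p0.1, p0.2), Finset.mem_union_right _ (Finset.mem_image_of_mem _ hp0),
        by simp [hβ0, hp0z]⟩
  · intro i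
    show min (α + x i) (β + y i) = _
    rw [hFx i, hGy i, const_add_inf', const_add_inf']
    rw [Finset.inf'_union (hF.image _) (hG.image _),
      Finset.inf'_image, Finset.inf'_image]
    congr 1
    · apply Finset.inf'_congr hF rfl
      intro p _
      simp [Function.comp]
      ring
    · apply Finset.inf'_congr hG rfl
      intro p _
      simp [Function.comp]
      ring

lemma add_mem_Mset {n : ℕ} (a : Fin n → ℝ) {x y : Fin n → ℝ}
    (hx : x ∈ Mset n a) (hy : y ∈ Mset n a) : x + y ∈ Mset n a := by
  classical
  obtain ⟨F, hF, hFc, hFz, hFx⟩ := hx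
  obtain ⟨G, hG, hGc, hGz, hGy⟩ := hy
  refine ⟨(F ×ˢ G).image (fun pq => (pq.1.1 + pq.2.1, pq.1.2 + pq.2.2)),
    ((hF.product hG).image _), ?_, ?_, ?_⟩
  · intro p hp
    rw [Finset.mem_image] at hp
    obtain ⟨q, hq, rfl⟩ := hp
    rw [Finset.mem_product] at hq
    exact ⟨add_nonneg (hFc _ hq.1).1 (hGc _ hq.2).1, add_nonneg (hFc _ hq.1).2 (hGc _ hq.2).2⟩
  · obtain ⟨p0, hp0, hp0z⟩ := hFz
    obtain ⟨q0, hq0, hq0z⟩ := hGz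
    exact ⟨(p0.1 + q0.1, p0.2 + q0.2),
      Finset.mem_image_of_mem (fun pq => (pq.1.1 + pq.2.1, pq.1.2 + pq.2.2))
        (show ((p0, q0) : (ℝ × ℝ) × (ℝ × ℝ)) ∈ F ×ˢ G from Finset.mem_product.mpr ⟨hp0, hq0⟩),
      by simp [hp0z, hq0z]⟩
  · intro i
    show x i + y i = _
    rw [hFx i, hGy i, inf'_add_inf', Finset.inf'_image]
    apply Finset.inf'_congr (hF.product hG) rfl
    intro p _
    simp [Function.comp]
    ring

lemma smul_mem_Mset {n : ℕ} (a : Fin n → ℝ) {t : ℝ} (ht : 0 ≤ t) {x : Fin n → ℝ}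
    (hx : x ∈ Mset n a) : t • x ∈ Mset n a := by
  classical
  obtain ⟨F, hF, hFc, hFz, hFx⟩ := hx
  refine ⟨F.image (fun p => (t * p.1, t * p.2)), hF.image _, ?_, ?_, ?_⟩
  · intro p hp
    rw [Finset.mem_image] at hp
    obtain ⟨q, hq, rfl⟩ := hp
    exact ⟨mul_nonneg ht (hFc q hq).1, mul_nonneg ht (hFc q hq).2⟩
  · obtain ⟨p0, hp0, hp0z⟩ := hFz
    exact ⟨(t * p0.1, t * p0.2), Finset.mem_image_of_mem _ hp0, by simp [hp0z]⟩
  · intro i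
    show t * x i = _
    rw [hFx i, mul_inf' hF ht, Finset.inf'_image]
    apply Finset.inf'_congr hF rfl
    intro p _
    simp [Function.comp]
    ring

lemma sum_mem_Mset {n : ℕ} (a : Fin n → ℝ) :
    ∀ (k : ℕ) (c : Fin k → ℝ) (v : Fin k → Fin n → ℝ),
      (∀ i, 0 ≤ c i) → (∀ i, v i ∈ Mset n a) → ∑ i, c i • v i ∈ Mset n a := by
  intro k
  induction k with
  | zero =>
    intro c v _ _
    simp only [Finset.univ_eq_empty, Finset.sum_empty]
    exact zero_mem_Mset a
  | succ k ih =>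
    intro c v hc hv
    rw [Fin.sum_univ_succ]
    exact add_mem_Mset a (smul_mem_Mset a (hc 0) (hv 0))
      (ih (fun i => c i.succ) (fun i => v i.succ) (fun i => hc i.succ) (fun i => hv i.succ))

lemma tconv_ray_eq_Mset {n : ℕ} (a : Fin n → ℝ) :
    tconv {x : Fin n → ℝ | ∃ t : ℝ, 0 ≤ t ∧ x = t • a} = Mset n a := by
  apply Set.Subset.antisymm
  · apply tconv_subset (tropConvex_Mset a)
    rintro x ⟨t, ht, rfl⟩
    exact smul_a_mem_Mset a ht
  · rintro x ⟨F, hF, hFc, hFz, hFx⟩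
    have hmem := trop_comb (tropConvex_tconv {x : Fin n → ℝ | ∃ t : ℝ, 0 ≤ t ∧ x = t • a})
      (fun p : ℝ × ℝ => p.2 • a) F hF Prod.fst
      (fun p hp => (hFc p hp).1) hFz
      (fun p hp => subset_tconv _ ⟨p.2, (hFc p hp).2, rfl⟩)
    convert hmem using 1
    funext i
    rw [hFx i]
    apply Finset.inf'_congr hF rfl
    intro p _
    simp

-- slope of φ on the grid, with junk value 0 when grid points coincide
noncomputable def slp (φ : ℝ → ℝ) (g : ℕ → ℝ) (q : ℕ) : ℝ :=
  (φ (g (q + 1)) - φ (g q)) / (g (q + 1) - g q)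

noncomputable def mu (φ : ℝ → ℝ) (g : ℕ → ℝ) : ℕ → ℝ
  | 0 => 0
  | (r + 1) => slp φ g r - slp φ g (r + 1)

lemma decomp {n : ℕ} (a : Fin n → ℝ) (φ : ℝ → ℝ)
    (hφ0 : φ 0 = 0) (hmono : Monotone φ)
    (key3 : ∀ u v w : ℝ, u ≤ v → v ≤ w → φ u * (w - v) + φ w * (v - u) ≤ φ v * (w - u))
    (x : Fin n → ℝ) (hx : ∀ i, x i = φ (a i)) :
    x ∈ posHull (tconv {(0 : Fin n → ℝ), a}) := by
  classical
  set S : Finset ℝ := insert 0 (Finset.image a Finset.univ) with hS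
  have h0S : (0 : ℝ) ∈ S := Finset.mem_insert_self _ _
  have hp : 0 < S.card := Finset.card_pos.mpr ⟨0, h0S⟩
  set p : ℕ := S.card with hpdef
  set e := S.orderIsoOfFin (rfl : S.card = p) with he
  set G : ℕ → ℝ := fun q => (e ⟨min q (p - 1), by omega⟩ : ℝ) with hGdef
  have hGcongr : ∀ q q', min q (p - 1) = min q' (p - 1) → G q = G q' := by
    intro q q' h
    exact congrArg (fun z : Fin p => (e z : ℝ)) (Fin.ext (by simpa using h))
  have hGmono : Monotone G := by
    intro q q' hqq
    have : (⟨min q (p - 1), by omega⟩ : Fin p) ≤ ⟨min q' (p - 1), by omega⟩ := by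
      rw [Fin.mk_le_mk]
      omega
    exact Subtype.coe_le_coe.mpr (e.monotone this)
  have hGmem : ∀ q, G q ∈ S := fun q => (e _).2
  have hGsurj : ∀ s ∈ S, ∃ q, q < p ∧ G q = s := by
    intro s hs
    refine ⟨(e.symm ⟨s, hs⟩).val, (e.symm ⟨s, hs⟩).isLt, ?_⟩
    have hmin : min ((e.symm ⟨s, hs⟩).val) (p - 1) = (e.symm ⟨s, hs⟩).val := by
      have := (e.symm ⟨s, hs⟩).isLt
      omega
    have : G ((e.symm ⟨s, hs⟩).val) = (e (e.symm ⟨s, hs⟩) : ℝ) := by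
      apply congrArg (fun z : Fin p => (e z : ℝ))
      exact Fin.ext (by simpa using hmin)
    rw [this]
    simp
  have hGstrict : ∀ q, q + 1 ≤ p - 1 → G q < G (q + 1) := by
    intro q hq
    have : (⟨min q (p - 1), by omega⟩ : Fin p) < ⟨min (q + 1) (p - 1), by omega⟩ := by
      rw [Fin.mk_lt_mk]
      omega
    exact Subtype.coe_lt_coe.mpr (e.strictMono this)
  have hGflat : ∀ q, p - 1 ≤ q → G (q + 1) = G q := by
    intro q h
    exact hGcongr _ _ (by omega)
  -- slopes
  have hσ0 : ∀ q, 0 ≤ slp φ G q := by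
    intro q
    exact div_nonneg (sub_nonneg.2 (hmono (hGmono (Nat.le_succ q))))
      (sub_nonneg.2 (hGmono (Nat.le_succ q)))
  have hσflat : ∀ q, p - 1 ≤ q → slp φ G q = 0 := by
    intro q h
    rw [slp, hGflat q h]
    simp
  have hσanti : ∀ q, slp φ G (q + 1) ≤ slp φ G q := by
    intro q
    rcases le_or_gt (p - 1) (q + 1) with h | h
    · rw [hσflat (q + 1) h]
      exact hσ0 q
    · have h1 : G q < G (q + 1) := hGstrict q (by omega)
      have h2 : G (q + 1) < G (q + 2) := hGstrict (q + 1) (by omega)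
      rw [slp, slp, div_le_div_iff₀ (by linarith) (by linarith)]
      have := key3 (G q) (G (q + 1)) (G (q + 2)) h1.le h2.le
      nlinarith [this]
  have hμ0 : ∀ q, 0 ≤ mu φ G q := by
    intro q
    cases q with
    | zero => simp [mu]
    | succ r => simp only [mu]; linarith [hσanti r]
  -- telescoping
  have telescope : ∀ q, q ≤ p → ∑ r ∈ Finset.Ico (q + 1) (p + 1), mu φ G r = slp φ G q := by
    intro q hq
    rw [Finset.sum_Ico_eq_sum_range]
    have hrw : ∀ s_1 ∈ Finset.range (p + 1 - (q + 1)), mu φ G (q + 1 + s_1)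
        = (fun t => slp φ G (q + t)) s_1 - (fun t => slp φ G (q + t)) (s_1 + 1) := by
      intro s1 _
      have h1 : q + 1 + s1 = (q + s1) + 1 := by omega
      rw [h1]
      rfl
    rw [Finset.sum_congr rfl hrw, Finset.sum_range_sub' (fun t => slp φ G (q + t))]
    rw [show q + 0 = q by omega, show q + (p + 1 - (q + 1)) = p by omega, hσflat p (by omega)]
    simp
  -- the summed function
  set Fs : ℝ → ℝ := fun s => ∑ r ∈ Finset.range (p + 1),
    mu φ G r * (min (G r) s - min (G r) 0) with hFsdef
  have diff : ∀ q, q + 1 ≤ p → Fs (G (q + 1)) - Fs (G q) = φ (G (q + 1)) - φ (G q) := by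
    intro q hq
    have hΔ : Fs (G (q + 1)) - Fs (G q) = ∑ r ∈ Finset.range (p + 1),
        mu φ G r * (min (G r) (G (q + 1)) - min (G r) (G q)) := by
      rw [hFsdef]
      simp only
      rw [← Finset.sum_sub_distrib]
      apply Finset.sum_congr rfl
      intro r _
      ring
    rw [hΔ, Finset.range_eq_Ico,
      ← Finset.sum_Ico_consecutive _ (Nat.zero_le (q + 1)) (by omega : q + 1 ≤ p + 1)]
    have h1 : ∑ r ∈ Finset.Ico 0 (q + 1), mu φ G r * (min (G r) (G (q + 1)) - min (G r) (G q)) = 0 := by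
      apply Finset.sum_eq_zero
      intro r hr
      have hr' : r ≤ q := by
        rw [Finset.mem_Ico] at hr
        omega
      have hle : G r ≤ G q := hGmono hr'
      have hle' : G r ≤ G (q + 1) := le_trans hle (hGmono (Nat.le_succ q))
      rw [min_eq_left hle, min_eq_left hle']
      ring
    have h2 : ∑ r ∈ Finset.Ico (q + 1) (p + 1), mu φ G r * (min (G r) (G (q + 1)) - min (G r) (G q))
        = slp φ G q * (G (q + 1) - G q) := by
      rw [show slp φ G q * (G (q + 1) - G q)
          = (∑ r ∈ Finset.Ico (q + 1) (p + 1), mu φ G r) * (G (q + 1) - G q) by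
        rw [telescope q (by omega)]]
      rw [Finset.sum_mul]
      apply Finset.sum_congr rfl
      intro r hr
      have hr' : q + 1 ≤ r := (Finset.mem_Ico.1 hr).1
      have hge : G (q + 1) ≤ G r := hGmono hr'
      rw [min_eq_right hge, min_eq_right (le_trans (hGmono (Nat.le_succ q)) hge)]
    rw [h1, h2, zero_add]
    rcases eq_or_lt_of_le (hGmono (Nat.le_succ q) : G q ≤ G (q + 1)) with heq | hlt
    · rw [slp, ← heq]
      simp
    · rw [slp, div_mul_cancel₀ _ (by linarith : G (q + 1) - G q ≠ 0)]
  have Dconst : ∀ q, q ≤ p → Fs (G q) - φ (G q) = Fs (G 0) - φ (G 0) := by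
    intro q
    induction q with
    | zero => intro _; rfl
    | succ r ih =>
      intro h
      have := diff r (by omega)
      have := ih (by omega)
      linarith
  have hFs0 : Fs 0 = 0 := by
    rw [hFsdef]
    apply Finset.sum_eq_zero
    intro r _
    simp
  obtain ⟨q0, hq0p, hq0⟩ := hGsurj 0 h0S
  have hD0 : Fs (G 0) - φ (G 0) = 0 := by
    have := Dconst q0 (by omega)
    rw [hq0, hFs0, hφ0] at this
    linarith
  have hFφ : ∀ q, q ≤ p → Fs (G q) = φ (G q) := by
    intro q hq
    have := Dconst q hq
    rw [hD0] at this
    linarith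
  -- assemble
  refine ⟨p + 1, fun j => mu φ G j.val,
    fun j => (fun i => min (G j.val) (a i) - min (G j.val) 0),
    fun j => hμ0 j.val, fun j => gen_mem a (G j.val), ?_⟩
  funext i
  have hai : a i ∈ S := Finset.mem_insert_of_mem (Finset.mem_image_of_mem a (Finset.mem_univ i))
  obtain ⟨qi, hqip, hqi⟩ := hGsurj (a i) hai
  have hcalc : x i = Fs (a i) := by
    rw [hx i, ← hqi]
    exact (hFφ qi (by omega)).symm
  rw [show (∑ j : Fin (p + 1), (fun j : Fin (p + 1) => mu φ G j.val) j •
      (fun j : Fin (p + 1) => (fun i' => min (G j.val) (a i') - min (G j.val) 0)) j) i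
      = ∑ j : Fin (p + 1), mu φ G j.val * (min (G j.val) (a i) - min (G j.val) 0) by
    rw [Finset.sum_apply]
    apply Finset.sum_congr rfl
    intro j _
    simp]
  rw [hcalc, hFsdef]
  exact (Fin.sum_univ_eq_sum_range (fun r => mu φ G r * (min (G r) (a i) - min (G r) 0)) (p + 1)).symm

lemma Mset_subset_posHull {n : ℕ} (a : Fin n → ℝ) :
    Mset n a ⊆ posHull (tconv {(0 : Fin n → ℝ), a}) := by
  rintro x ⟨F, hF, hc, hz, hx⟩
  set φ : ℝ → ℝ := fun s => F.inf' hF (fun p => p.1 + p.2 * s) with hφdef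
  have hφ0 : φ 0 = 0 := by
    apply le_antisymm
    · obtain ⟨p0, hp0, hp0z⟩ := hz
      calc φ 0 ≤ p0.1 + p0.2 * 0 := Finset.inf'_le _ hp0
        _ = 0 := by rw [hp0z]; ring
    · apply Finset.le_inf'
      intro p hp
      have h1 := (hc p hp).1
      nlinarith
  have hmono : Monotone φ := by
    intro u v huv
    obtain ⟨q, hq, hqe⟩ := Finset.exists_mem_eq_inf' hF (fun p => p.1 + p.2 * v)
    calc φ u ≤ q.1 + q.2 * u := Finset.inf'_le _ hq
      _ ≤ q.1 + q.2 * v := by nlinarith [(hc q hq).2]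
      _ = φ v := hqe.symm
  have key3 : ∀ u v w : ℝ, u ≤ v → v ≤ w → φ u * (w - v) + φ w * (v - u) ≤ φ v * (w - u) := by
    intro u v w huv hvw
    obtain ⟨q, hq, hqe⟩ := Finset.exists_mem_eq_inf' hF (fun p => p.1 + p.2 * v)
    have hu : φ u ≤ q.1 + q.2 * u := Finset.inf'_le _ hq
    have hw : φ w ≤ q.1 + q.2 * w := Finset.inf'_le _ hq
    have hv : φ v = q.1 + q.2 * v := hqe
    nlinarith [mul_le_mul_of_nonneg_right hu (by linarith : (0:ℝ) ≤ w - v),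
      mul_le_mul_of_nonneg_right hw (by linarith : (0:ℝ) ≤ v - u)]
  exact decomp a φ hφ0 hmono key3 x (fun i => hx i)

theorem tconv_ray_eq_posHull_tconv (n : ℕ) (a : Fin n → ℝ) :
    tconv {x : Fin n → ℝ | ∃ t : ℝ, 0 ≤ t ∧ x = t • a} =
      posHull (tconv {(0 : Fin n → ℝ), a}) := by
  rw [tconv_ray_eq_Mset a]
  apply Set.Subset.antisymm (Mset_subset_posHull a)
  rintro x ⟨k, c, v, hc, hv, rfl⟩
  apply sum_mem_Mset a k c v hc
  intro i
  have hsub : tconv {(0 : Fin n → ℝ), a} ⊆ Mset n a := by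
    apply tconv_subset (tropConvex_Mset a)
    rintro y (rfl | hy)
    · exact zero_mem_Mset a
    · rw [Set.mem_singleton_iff] at hy
      rw [hy]
      simpa using smul_a_mem_Mset a (zero_le_one)
  exact hsub (hv i)
end

section
/- If V is a finite subset of ℝ², then tconv(convexHull(V)) = convexHull(tconv(V)). -/
namespace TropAux

open Finset

lemma _root_.tconv_tropConvex {n : ℕ} (U : Set (Fin n → ℝ)) : TropConvex (tconv U) := by
  intro x hx y hy a b hab T hT
  exact hT.1 x (hx T hT) y (hy T hT) a b hab

lemma subset_tconv {n : ℕ} (U : Set (Fin n → ℝ)) : U ⊆ tconv U :=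
  fun z hz => Set.mem_sInter.mpr fun T hT => hT.2 hz

lemma tconv_min {n : ℕ} {U T : Set (Fin n → ℝ)} (hT : TropConvex T) (hUT : U ⊆ T) :
    tconv U ⊆ T := fun z hz => Set.mem_sInter.mp hz T ⟨hT, hUT⟩

lemma min_eq_zero_nonneg {a b : ℝ} (h : min a b = 0) : 0 ≤ a ∧ 0 ≤ b :=
  ⟨h ▸ min_le_left a b, h ▸ min_le_right a b⟩

/-- `inf'` commutes with adding a constant. -/
lemma inf'_add_const {α : Type*} (s : Finset α) (hs : s.Nonempty) (f : α → ℝ) (c : ℝ) :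
    s.inf' hs (fun i => c + f i) = c + s.inf' hs f := by
  apply le_antisymm
  · obtain ⟨i, hi, hie⟩ := s.exists_mem_eq_inf' hs f
    calc s.inf' hs (fun i => c + f i) ≤ c + f i := Finset.inf'_le _ hi
    _ = c + s.inf' hs f := by rw [hie]
  · exact Finset.le_inf' _ _ fun b hb => by have := Finset.inf'_le f hb; linarith

lemma inf'_min_distrib {α : Type*} (s : Finset α) (hs : s.Nonempty) (f g : α → ℝ) :
    s.inf' hs (fun i => min (f i) (g i)) = min (s.inf' hs f) (s.inf' hs g) := by
  apply le_antisymm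
  · apply le_min
    · exact Finset.le_inf' _ _ fun b hb =>
        (Finset.inf'_le _ hb).trans (min_le_left _ _)
    · exact Finset.le_inf' _ _ fun b hb =>
        (Finset.inf'_le _ hb).trans (min_le_right _ _)
  · exact Finset.le_inf' _ _ fun b hb =>
      min_le_min (Finset.inf'_le _ hb) (Finset.inf'_le _ hb)

/-- Any tropical combination of points of a tropically convex set belongs to the set. -/
lemma tropCombo_mem {T : Set (Fin 2 → ℝ)} (hT : TropConvex T) :
    ∀ (G : Finset (Fin 2 → ℝ)) (hG : G.Nonempty), ↑G ⊆ T →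
      ∀ l : (Fin 2 → ℝ) → ℝ, (∀ v ∈ G, 0 ≤ l v) → (∃ v ∈ G, l v = 0) →
      (fun j => G.inf' hG fun v => l v + v j) ∈ T := by
  intro G hG
  induction hG using Finset.Nonempty.cons_induction with
  | singleton v =>
    intro hGT l _ hlz
    obtain ⟨w, hw, hlw⟩ := hlz
    rw [Finset.mem_singleton] at hw
    subst hw
    have : (fun j => ({w} : Finset (Fin 2 → ℝ)).inf' (Finset.singleton_nonempty _)
        fun v => l v + v j) = w := by
      funext j
      rw [Finset.inf'_singleton, hlw, zero_add]
    rw [this]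
    exact hGT (by simp)
  | cons v s hvs hs ih =>
    intro hGT l hl0 hlz
    have hsub : ↑s ⊆ T := fun w hw => hGT (by simp [Finset.mem_cons_of_mem]; right; exact_mod_cast hw)
    set m := s.inf' hs l with hm
    have hm0 : 0 ≤ m := Finset.le_inf' _ _ fun w hw => hl0 w (Finset.mem_cons_of_mem hw)
    obtain ⟨w₀, hw₀, hw₀e⟩ := s.exists_mem_eq_inf' hs l
    have hz' := ih hsub (fun w => l w - m)
      (fun w hw => sub_nonneg.mpr (Finset.inf'_le _ hw))
      ⟨w₀, hw₀, by show l w₀ - m = 0; rw [hm, hw₀e]; ring⟩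
    have hvT : v ∈ T := hGT (by simp)
    have hmin0 : min (l v) m = 0 := by
      obtain ⟨w, hw, hlw⟩ := hlz
      rcases Finset.mem_cons.mp hw with rfl | hws
      · rw [hlw]; exact min_eq_left hm0
      · have h1 : m ≤ 0 := hlw ▸ Finset.inf'_le _ hws
        have h2 : m = 0 := le_antisymm h1 hm0
        rw [h2]; exact min_eq_right (hl0 v (Finset.mem_cons_self _ _))
    have hcomb := hT v hvT _ hz' (l v) m hmin0
    have heq : (fun i => min (l v + v i)
        (m + (fun j => s.inf' hs fun w => (l w - m) + w j) i)) =
        (fun j => (Finset.cons v s hvs).inf' (Finset.cons_nonempty hvs)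
          fun w => l w + w j) := by
      funext j
      have h3 : m + (s.inf' hs fun w => (l w - m) + w j) = s.inf' hs fun w => l w + w j := by
        rw [← inf'_add_const]
        exact Finset.inf'_congr (H := hs) rfl fun w _ => by ring
      simp only [h3]
      rw [Finset.inf'_cons]
    rw [heq] at hcomb
    exact hcomb


noncomputable section SpanSection

variable (F : Finset (Fin 2 → ℝ)) (hF : F.Nonempty)

/-- The normalized tropical span of the finite set `F`. -/
def spanF : Set (Fin 2 → ℝ) :=
  {z | ∃ l : (Fin 2 → ℝ) → ℝ, (∀ w ∈ F, 0 ≤ l w) ∧ (∃ w ∈ F, l w = 0) ∧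
      ∀ j, z j = F.inf' hF fun w => l w + w j}

abbrev cA : ℝ := F.sup' hF fun w => w 0
abbrev cB : ℝ := F.sup' hF fun w => w 1
abbrev cD : ℝ := F.sup' hF fun w => w 0 - w 1
abbrev cD' : ℝ := F.sup' hF fun w => w 1 - w 0

abbrev ustar : Fin 2 → ℝ := ![cA F hF, cA F hF - cD F hF]
abbrev vstar : Fin 2 → ℝ := ![cB F hF - cD' F hF, cB F hF]

lemma spanF_tropConvex : TropConvex (spanF F hF) := by
  rintro x ⟨l, hl0, ⟨wx, hwx, hwx0⟩, hlx⟩ y ⟨l', hl'0, ⟨wy, hwy, hwy0⟩, hly⟩ a b hab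
  obtain ⟨ha, hb⟩ := min_eq_zero_nonneg hab
  refine ⟨fun w => min (a + l w) (b + l' w), ?_, ?_, ?_⟩
  · intro w hw
    exact le_min (add_nonneg ha (hl0 w hw)) (add_nonneg hb (hl'0 w hw))
  · rcases min_cases a b with ⟨hab', _⟩ | ⟨hab', _⟩
    · refine ⟨wx, hwx, ?_⟩
      show min (a + l wx) (b + l' wx) = 0
      have ha0 : a = 0 := by rw [← hab, hab']
      rw [hwx0, ha0, add_zero]
      exact min_eq_left (add_nonneg hb (hl'0 wx hwx))
    · refine ⟨wy, hwy, ?_⟩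
      show min (a + l wy) (b + l' wy) = 0
      have hb0 : b = 0 := by rw [← hab, hab']
      rw [hwy0, hb0, add_zero]
      exact min_eq_right (add_nonneg ha (hl0 wy hwy))
  · intro j
    have : ∀ w ∈ F, min (a + l w) (b + l' w) + w j
        = min (a + (l w + w j)) (b + (l' w + w j)) := by
      intro w _
      rw [← min_add_add_right]
      ring_nf
    calc min (a + x j) (b + y j)
        = min (a + F.inf' hF fun w => l w + w j) (b + F.inf' hF fun w => l' w + w j) := by
          rw [hlx j, hly j]
      _ = min (F.inf' hF fun w => a + (l w + w j)) (F.inf' hF fun w => b + (l' w + w j)) := by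
          rw [inf'_add_const, inf'_add_const]
      _ = F.inf' hF fun w => min (a + (l w + w j)) (b + (l' w + w j)) := by
          rw [inf'_min_distrib]
      _ = F.inf' hF fun w => min (a + l w) (b + l' w) + w j := by
          exact (Finset.inf'_congr (H := hF) rfl fun w hw => (this w hw).symm)

lemma subset_spanF : ↑F ⊆ spanF F hF := by
  intro v hv
  rw [Finset.mem_coe] at hv
  refine ⟨fun w => max 0 (max (v 0 - w 0) (v 1 - w 1)), fun w _ => le_max_left _ _,
    ⟨v, hv, by simp⟩, ?_⟩
  intro j
  apply le_antisymm
  · apply Finset.le_inf'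
    intro w _
    show v j ≤ max 0 (max (v 0 - w 0) (v 1 - w 1)) + w j
    have h1 : v j - w j ≤ max (v 0 - w 0) (v 1 - w 1) := by
      fin_cases j
      · exact le_max_left _ _
      · exact le_max_right _ _
    have h2 : v j - w j ≤ max 0 (max (v 0 - w 0) (v 1 - w 1)) := h1.trans (le_max_right _ _)
    linarith
  · calc F.inf' hF (fun w => max 0 (max (v 0 - w 0) (v 1 - w 1)) + w j)
        ≤ max 0 (max (v 0 - v 0) (v 1 - v 1)) + v j := Finset.inf'_le _ hv
      _ = v j := by simp

lemma spanF_subset_tconv {T : Set (Fin 2 → ℝ)} (hT : TropConvex T) (hFT : ↑F ⊆ T) :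
    spanF F hF ⊆ T := by
  rintro z ⟨l, hl0, ⟨w, hw, hw0⟩, hlz⟩
  have := tropCombo_mem hT F hF hFT l hl0 ⟨w, hw, hw0⟩
  have hze : z = fun j => F.inf' hF fun v => l v + v j := funext hlz
  rw [hze]
  exact this

lemma spanF_bounds {z : Fin 2 → ℝ} (hz : z ∈ spanF F hF) :
    z 0 ≤ cA F hF ∧ z 1 ≤ cB F hF ∧ z 0 - z 1 ≤ cD F hF ∧ z 1 - z 0 ≤ cD' F hF := by
  obtain ⟨l, hl0, ⟨w₀, hw₀, hw₀0⟩, hlz⟩ := hz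
  obtain ⟨w1, hw1, hw1e⟩ := F.exists_mem_eq_inf' hF (fun w => l w + w 1)
  obtain ⟨w2, hw2, hw2e⟩ := F.exists_mem_eq_inf' hF (fun w => l w + w 0)
  refine ⟨?_, ?_, ?_, ?_⟩
  · calc z 0 ≤ l w₀ + w₀ 0 := (hlz 0) ▸ Finset.inf'_le _ hw₀
      _ = w₀ 0 := by rw [hw₀0, zero_add]
      _ ≤ cA F hF := Finset.le_sup' (fun w => w 0) hw₀
  · calc z 1 ≤ l w₀ + w₀ 1 := (hlz 1) ▸ Finset.inf'_le _ hw₀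
      _ = w₀ 1 := by rw [hw₀0, zero_add]
      _ ≤ cB F hF := Finset.le_sup' (fun w => w 1) hw₀
  · have h1 : z 1 = l w1 + w1 1 := by rw [hlz 1, hw1e]
    have h2 : z 0 ≤ l w1 + w1 0 := (hlz 0) ▸ Finset.inf'_le _ hw1
    have h3 : w1 0 - w1 1 ≤ cD F hF := Finset.le_sup' (fun w => w 0 - w 1) hw1
    linarith
  · have h1 : z 0 = l w2 + w2 0 := by rw [hlz 0, hw2e]
    have h2 : z 1 ≤ l w2 + w2 1 := (hlz 1) ▸ Finset.inf'_le _ hw2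
    have h3 : w2 1 - w2 0 ≤ cD' F hF := Finset.le_sup' (fun w => w 1 - w 0) hw2
    linarith

lemma ustar_mem : ustar F hF ∈ spanF F hF := by
  obtain ⟨wA, hwAF, hwA⟩ := F.exists_mem_eq_sup' hF (fun w => w 0)
  obtain ⟨wD, hwDF, hwD⟩ := F.exists_mem_eq_sup' hF (fun w => w 0 - w 1)
  have hA : cA F hF = wA 0 := hwA
  have hD : cD F hF = wD 0 - wD 1 := hwD
  have hDA : wA 0 - wA 1 ≤ cD F hF := Finset.le_sup' (fun w => w 0 - w 1) hwAF
  have hAD : wD 0 ≤ cA F hF := Finset.le_sup' (fun w => w 0) hwDF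
  set A := cA F hF
  set D := cD F hF
  have hlwA : max 0 (max (A - wA 0) (A - D - wA 1)) = 0 := by
    apply le_antisymm
    · apply max_le le_rfl
      apply max_le <;> linarith
    · exact le_max_left _ _
  have hlwD : max 0 (max (A - wD 0) (A - D - wD 1)) = A - wD 0 := by
    have he : A - D - wD 1 = A - wD 0 := by rw [hD]; ring
    rw [he, max_self]
    exact max_eq_right (by linarith)
  refine ⟨fun w => max 0 (max (A - w 0) (A - D - w 1)), fun w _ => le_max_left _ _,
    ⟨wA, hwAF, hlwA⟩, ?_⟩
  intro j
  fin_cases j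
  · show ustar F hF 0 = _
    have hu0 : ustar F hF 0 = A := rfl
    rw [hu0]
    apply le_antisymm
    · apply Finset.le_inf'
      intro w _
      show A ≤ max 0 (max (A - w 0) (A - D - w 1)) + w 0
      have : A - w 0 ≤ max 0 (max (A - w 0) (A - D - w 1)) :=
        (le_max_left _ _).trans (le_max_right _ _)
      linarith
    · calc F.inf' hF (fun w => max 0 (max (A - w 0) (A - D - w 1)) + w 0)
          ≤ max 0 (max (A - wA 0) (A - D - wA 1)) + wA 0 := Finset.inf'_le _ hwAF
        _ = A := by rw [hlwA, zero_add, hA]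
  · show ustar F hF 1 = _
    have hu1 : ustar F hF 1 = A - D := rfl
    rw [hu1]
    apply le_antisymm
    · apply Finset.le_inf'
      intro w _
      show A - D ≤ max 0 (max (A - w 0) (A - D - w 1)) + w 1
      have : A - D - w 1 ≤ max 0 (max (A - w 0) (A - D - w 1)) :=
        (le_max_right _ _).trans (le_max_right _ _)
      linarith
    · calc F.inf' hF (fun w => max 0 (max (A - w 0) (A - D - w 1)) + w 1)
          ≤ max 0 (max (A - wD 0) (A - D - wD 1)) + wD 1 := Finset.inf'_le _ hwDF
        _ = A - D := by rw [hlwD, hD]; ring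

lemma vstar_mem : vstar F hF ∈ spanF F hF := by
  obtain ⟨wB, hwBF, hwB⟩ := F.exists_mem_eq_sup' hF (fun w => w 1)
  obtain ⟨wD, hwDF, hwD⟩ := F.exists_mem_eq_sup' hF (fun w => w 1 - w 0)
  have hB : cB F hF = wB 1 := hwB
  have hD : cD' F hF = wD 1 - wD 0 := hwD
  have hDB : wB 1 - wB 0 ≤ cD' F hF := Finset.le_sup' (fun w => w 1 - w 0) hwBF
  have hBD : wD 1 ≤ cB F hF := Finset.le_sup' (fun w => w 1) hwDF
  set B := cB F hF
  set D := cD' F hF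
  have hlwB : max 0 (max (B - D - wB 0) (B - wB 1)) = 0 := by
    apply le_antisymm
    · apply max_le le_rfl
      apply max_le <;> linarith
    · exact le_max_left _ _
  have hlwD : max 0 (max (B - D - wD 0) (B - wD 1)) = B - wD 1 := by
    have he : B - D - wD 0 = B - wD 1 := by rw [hD]; ring
    rw [he, max_self]
    exact max_eq_right (by linarith)
  refine ⟨fun w => max 0 (max (B - D - w 0) (B - w 1)), fun w _ => le_max_left _ _,
    ⟨wB, hwBF, hlwB⟩, ?_⟩
  intro j
  fin_cases j
  · show vstar F hF 0 = _
    have hu0 : vstar F hF 0 = B - D := rfl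
    rw [hu0]
    apply le_antisymm
    · apply Finset.le_inf'
      intro w _
      show B - D ≤ max 0 (max (B - D - w 0) (B - w 1)) + w 0
      have : B - D - w 0 ≤ max 0 (max (B - D - w 0) (B - w 1)) :=
        (le_max_left _ _).trans (le_max_right _ _)
      linarith
    · calc F.inf' hF (fun w => max 0 (max (B - D - w 0) (B - w 1)) + w 0)
          ≤ max 0 (max (B - D - wD 0) (B - wD 1)) + wD 0 := Finset.inf'_le _ hwDF
        _ = B - D := by rw [hlwD, hD]; ring
  · show vstar F hF 1 = _
    have hu1 : vstar F hF 1 = B := rfl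
    rw [hu1]
    apply le_antisymm
    · apply Finset.le_inf'
      intro w _
      show B ≤ max 0 (max (B - D - w 0) (B - w 1)) + w 1
      have : B - w 1 ≤ max 0 (max (B - D - w 0) (B - w 1)) :=
        (le_max_right _ _).trans (le_max_right _ _)
      linarith
    · calc F.inf' hF (fun w => max 0 (max (B - D - w 0) (B - w 1)) + w 1)
          ≤ max 0 (max (B - D - wB 0) (B - wB 1)) + wB 1 := Finset.inf'_le _ hwBF
        _ = B := by rw [hlwB, zero_add, hB]

lemma min_mem_spanF {p q : Fin 2 → ℝ} (hp : p ∈ spanF F hF) (hq : q ∈ spanF F hF) :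
    (fun j => min (p j) (q j)) ∈ spanF F hF := by
  have := spanF_tropConvex F hF p hp q hq 0 0 (by simp)
  simpa using this

lemma hull_bounds {z : Fin 2 → ℝ} (hz : z ∈ convexHull ℝ (spanF F hF)) :
    z 0 ≤ cA F hF ∧ z 1 ≤ cB F hF ∧ z 0 - z 1 ≤ cD F hF ∧ z 1 - z 0 ≤ cD' F hF := by
  have l0 : IsLinearMap ℝ fun w : Fin 2 → ℝ => w 0 := ⟨fun a b => rfl, fun c a => rfl⟩
  have l1 : IsLinearMap ℝ fun w : Fin 2 → ℝ => w 1 := ⟨fun a b => rfl, fun c a => rfl⟩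
  have l2 : IsLinearMap ℝ fun w : Fin 2 → ℝ => w 0 - w 1 := by
    constructor
    · intro a b; show (a 0 + b 0) - (a 1 + b 1) = _; ring
    · intro c a; show (c * a 0) - (c * a 1) = c • (a 0 - a 1); rw [smul_eq_mul]; ring
  have l3 : IsLinearMap ℝ fun w : Fin 2 → ℝ => w 1 - w 0 := by
    constructor
    · intro a b; show (a 1 + b 1) - (a 0 + b 0) = _; ring
    · intro c a; show (c * a 1) - (c * a 0) = c • (a 1 - a 0); rw [smul_eq_mul]; ring
  refine ⟨?_, ?_, ?_, ?_⟩
  · exact convexHull_min (fun p hp => (spanF_bounds F hF hp).1) (convex_halfSpace_le l0 _) hz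
  · exact convexHull_min (fun p hp => (spanF_bounds F hF hp).2.1) (convex_halfSpace_le l1 _) hz
  · exact convexHull_min (fun p hp => (spanF_bounds F hF hp).2.2.1) (convex_halfSpace_le l2 _) hz
  · exact convexHull_min (fun p hp => (spanF_bounds F hF hp).2.2.2) (convex_halfSpace_le l3 _) hz

set_option maxHeartbeats 2000000 in
lemma key_min_mem
    (x : Fin 2 → ℝ) (hx : x ∈ convexHull ℝ (spanF F hF))
    (y : Fin 2 → ℝ) (hy : y ∈ convexHull ℝ (spanF F hF))
    (t : ℝ) (ht : 0 ≤ t) :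
    (fun j => min (t + x j) (y j)) ∈ convexHull ℝ (spanF F hF) := by
  classical
  obtain ⟨hxA, hxB, hxD, hxD'⟩ := hull_bounds F hF hx
  obtain ⟨hyA, hyB, hyD, hyD'⟩ := hull_bounds F hF hy
  rw [_root_.convexHull_eq] at hx hy
  obtain ⟨ι, tx, wx, px, hwx0, hwx1, hpx, hcx⟩ := hx
  obtain ⟨ι', ty, wy, py, hwy0, hwy1, hpy, hcy⟩ := hy
  set S := spanF F hF with hS
  set P : Set (Fin 2 → ℝ) :=
    (↑(tx.image px) ∪ ↑(ty.image py)) ∪ ({ustar F hF, vstar F hF} ∪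
      Set.image2 (fun (p q : Fin 2 → ℝ) => fun j => min (p j) (q j))
        (↑(tx.image px) : Set (Fin 2 → ℝ)) (↑(ty.image py) : Set (Fin 2 → ℝ))) with hP
  have hPfin : P.Finite := by
    apply Set.Finite.union
    · exact (tx.image px).finite_toSet.union (ty.image py).finite_toSet
    · exact (Set.finite_singleton _ |>.insert _).union
        (Set.Finite.image2 _ (tx.image px).finite_toSet (ty.image py).finite_toSet)
  have hPS : P ⊆ S := by
    rintro p (hp | hp)
    · rcases hp with hp | hp
      · obtain ⟨i, hi, rfl⟩ := Finset.mem_image.mp (Finset.mem_coe.mp hp)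
        exact hpx i hi
      · obtain ⟨i, hi, rfl⟩ := Finset.mem_image.mp (Finset.mem_coe.mp hp)
        exact hpy i hi
    · rcases hp with hp | hp
      · rcases hp with rfl | hp
        · exact ustar_mem F hF
        · rw [Set.mem_singleton_iff] at hp; subst hp; exact vstar_mem F hF
      · obtain ⟨p₁, hp₁, p₂, hp₂, rfl⟩ := hp
        obtain ⟨i, hi, rfl⟩ := Finset.mem_image.mp (Finset.mem_coe.mp hp₁)
        obtain ⟨i', hi', rfl⟩ := Finset.mem_image.mp (Finset.mem_coe.mp hp₂)
        exact min_mem_spanF F hF (hpx i hi) (hpy i' hi')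
  set C := convexHull ℝ P with hC
  have hCS : C ⊆ convexHull ℝ S := convexHull_mono hPS
  have hCclosed : IsClosed C := (hPfin.isCompact_convexHull ℝ).isClosed
  have hCconvex : Convex ℝ C := convex_convexHull ℝ P
  have hmemx : ∀ i ∈ tx, px i ∈ P := fun i hi =>
    Set.mem_union_left _ (Set.mem_union_left _ (Finset.mem_coe.mpr (Finset.mem_image_of_mem px hi)))
  have hmemy : ∀ i ∈ ty, py i ∈ P := fun i hi =>
    Set.mem_union_left _ (Set.mem_union_right _ (Finset.mem_coe.mpr (Finset.mem_image_of_mem py hi)))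
  have hxC : x ∈ C := by
    rw [← hcx]
    exact Finset.centerMass_mem_convexHull tx hwx0 (by rw [hwx1]; norm_num) hmemx
  have hyC : y ∈ C := by
    rw [← hcy]
    exact Finset.centerMass_mem_convexHull ty hwy0 (by rw [hwy1]; norm_num) hmemy
  have huC : ustar F hF ∈ C := subset_convexHull ℝ P
    (Set.mem_union_right _ (Set.mem_union_left _ (Set.mem_insert _ _)))
  have hvC : vstar F hF ∈ C := subset_convexHull ℝ P
    (Set.mem_union_right _ (Set.mem_union_left _ (Set.mem_insert_of_mem _ rfl)))
  have hsumprod : ∑ p ∈ tx ×ˢ ty, wx p.1 * wy p.2 = 1 := by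
    rw [Finset.sum_product]
    calc ∑ i ∈ tx, ∑ i' ∈ ty, wx i * wy i'
        = ∑ i ∈ tx, wx i * ∑ i' ∈ ty, wy i' :=
          Finset.sum_congr rfl fun i _ => (Finset.mul_sum _ _ _).symm
      _ = 1 := by rw [hwy1]; simp [hwx1]
  set g : Fin 2 → ℝ := (tx ×ˢ ty).centerMass (fun p => wx p.1 * wy p.2)
      (fun p => fun j => min (px p.1 j) (py p.2 j)) with hgdef
  have hgC : g ∈ C := by
    rw [hgdef]
    refine Finset.centerMass_mem_convexHull _ ?_ (by rw [hsumprod]; norm_num) ?_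
    · intro p hp
      exact mul_nonneg (hwx0 _ (Finset.mem_product.mp hp).1) (hwy0 _ (Finset.mem_product.mp hp).2)
    · intro p hp
      refine Set.mem_union_right _ (Set.mem_union_right _ ?_)
      exact Set.mem_image2_of_mem (Finset.mem_coe.mpr
        (Finset.mem_image_of_mem px (Finset.mem_product.mp hp).1))
        (Finset.mem_coe.mpr (Finset.mem_image_of_mem py (Finset.mem_product.mp hp).2))
  have hgj : ∀ j, g j = ∑ p ∈ tx ×ˢ ty, (wx p.1 * wy p.2) * min (px p.1 j) (py p.2 j) := by
    intro j
    rw [hgdef, Finset.centerMass_eq_of_sum_1 _ _ hsumprod, Finset.sum_apply]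
    simp
  have hxj : ∀ j, x j = ∑ i ∈ tx, wx i * px i j := by
    intro j
    rw [← hcx, Finset.centerMass_eq_of_sum_1 _ _ hwx1, Finset.sum_apply]
    simp
  have hyj : ∀ j, y j = ∑ i ∈ ty, wy i * py i j := by
    intro j
    rw [← hcy, Finset.centerMass_eq_of_sum_1 _ _ hwy1, Finset.sum_apply]
    simp
  have hgx : ∀ j, g j ≤ x j := by
    intro j
    rw [hgj j, hxj j]
    calc ∑ p ∈ tx ×ˢ ty, (wx p.1 * wy p.2) * min (px p.1 j) (py p.2 j)
        ≤ ∑ p ∈ tx ×ˢ ty, (wx p.1 * wy p.2) * px p.1 j := by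
          refine Finset.sum_le_sum fun p hp => ?_
          exact mul_le_mul_of_nonneg_left (min_le_left _ _)
            (mul_nonneg (hwx0 _ (Finset.mem_product.mp hp).1)
              (hwy0 _ (Finset.mem_product.mp hp).2))
      _ = ∑ i ∈ tx, wx i * px i j := by
          rw [Finset.sum_product]
          refine Finset.sum_congr rfl fun i _ => ?_
          calc ∑ i' ∈ ty, wx i * wy i' * px i j
              = ∑ i' ∈ ty, (wx i * px i j) * wy i' :=
                Finset.sum_congr rfl fun i' _ => by ring
            _ = (wx i * px i j) * ∑ i' ∈ ty, wy i' := (Finset.mul_sum _ _ _).symm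
            _ = wx i * px i j := by rw [hwy1, mul_one]
  have hgy : ∀ j, g j ≤ y j := by
    intro j
    rw [hgj j, hyj j]
    calc ∑ p ∈ tx ×ˢ ty, (wx p.1 * wy p.2) * min (px p.1 j) (py p.2 j)
        ≤ ∑ p ∈ tx ×ˢ ty, (wx p.1 * wy p.2) * py p.2 j := by
          refine Finset.sum_le_sum fun p hp => ?_
          exact mul_le_mul_of_nonneg_left (min_le_right _ _)
            (mul_nonneg (hwx0 _ (Finset.mem_product.mp hp).1)
              (hwy0 _ (Finset.mem_product.mp hp).2))
      _ = ∑ i' ∈ ty, wy i' * py i' j := by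
          rw [Finset.sum_product]
          calc ∑ i ∈ tx, ∑ i' ∈ ty, wx i * wy i' * py i' j
              = ∑ i ∈ tx, wx i * ∑ i' ∈ ty, wy i' * py i' j := by
                refine Finset.sum_congr rfl fun i _ => ?_
                rw [Finset.mul_sum]
                exact Finset.sum_congr rfl fun i' _ => by ring
            _ = (∑ i ∈ tx, wx i) * ∑ i' ∈ ty, wy i' * py i' j := (Finset.sum_mul _ _ _).symm
            _ = ∑ i' ∈ ty, wy i' * py i' j := by rw [hwx1, one_mul]
  set z : Fin 2 → ℝ := fun j => min (t + x j) (y j) with hzdef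
  show z ∈ convexHull ℝ S
  by_contra hzS
  have hzC : z ∉ C := fun h => hzS (hCS h)
  obtain ⟨f, u, hfz, hfb⟩ := geometric_hahn_banach_point_closed hCconvex hCclosed hzC
  suffices hexb : ∃ b ∈ C, f b ≤ f z by
    obtain ⟨b, hbC, hble⟩ := hexb
    have := hfb b hbC
    linarith
  set c0 := f ((Pi.single 0 1 : Fin 2 → ℝ)) with hc0def
  set c1 := f ((Pi.single 1 1 : Fin 2 → ℝ)) with hc1def
  have hfeval : ∀ w : Fin 2 → ℝ, f w = w 0 * c0 + w 1 * c1 := by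
    intro w
    have hw : w = w 0 • (Pi.single 0 1 : Fin 2 → ℝ) + w 1 • (Pi.single 1 1 : Fin 2 → ℝ) := by
      funext j
      fin_cases j <;> simp
    calc f w = f (w 0 • (Pi.single 0 1 : Fin 2 → ℝ) + w 1 • (Pi.single 1 1 : Fin 2 → ℝ)) := by rw [← hw]
      _ = w 0 * c0 + w 1 * c1 := by
          rw [map_add, map_smul, map_smul, smul_eq_mul, smul_eq_mul]
  have hz0x : z 0 ≤ t + x 0 := min_le_left _ _
  have hz0y : z 0 ≤ y 0 := min_le_right _ _
  have hz1x : z 1 ≤ t + x 1 := min_le_left _ _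
  have hz1y : z 1 ≤ y 1 := min_le_right _ _
  have hgz0 : g 0 ≤ z 0 := le_min (by linarith [hgx 0]) (by linarith [hgy 0])
  have hgz1 : g 1 ≤ z 1 := le_min (by linarith [hgx 1]) (by linarith [hgy 1])
  have hfu : f (ustar F hF) = cA F hF * c0 + (cA F hF - cD F hF) * c1 := by
    rw [hfeval]
    show (![cA F hF, cA F hF - cD F hF] : Fin 2 → ℝ) 0 * c0 +
      (![cA F hF, cA F hF - cD F hF] : Fin 2 → ℝ) 1 * c1 = _
    simp
  have hfv : f (vstar F hF) = (cB F hF - cD' F hF) * c0 + cB F hF * c1 := by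
    rw [hfeval]
    show (![cB F hF - cD' F hF, cB F hF] : Fin 2 → ℝ) 0 * c0 +
      (![cB F hF - cD' F hF, cB F hF] : Fin 2 → ℝ) 1 * c1 = _
    simp
  rcases le_or_gt c0 0 with hc0n | hc0p <;> rcases le_or_gt c1 0 with hc1n | hc1p
  · -- c0 ≤ 0, c1 ≤ 0 : take b = y
    refine ⟨y, hyC, ?_⟩
    rw [hfeval y, hfeval z]
    nlinarith [mul_nonneg (sub_nonneg.2 hz0y) (neg_nonneg.2 hc0n),
      mul_nonneg (sub_nonneg.2 hz1y) (neg_nonneg.2 hc1n)]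
  · -- c0 ≤ 0, c1 > 0
    rcases min_cases (t + x 1) (y 1) with ⟨he1, hle1⟩ | ⟨he1, _⟩
    · -- z 1 = t + x 1
      have hz1 : z 1 = t + x 1 := he1
      rcases le_or_gt 0 (c0 + c1) with hcs | hcs
      · refine ⟨x, hxC, ?_⟩
        rw [hfeval x, hfeval z]
        nlinarith [mul_nonneg (sub_nonneg.2 (show z 0 - x 0 ≤ t by linarith)) (neg_nonneg.2 hc0n),
          mul_nonneg ht (le_of_lt hc1p), mul_nonneg ht (show (0:ℝ) ≤ c0 + c1 from hcs)]
      · refine ⟨ustar F hF, huC, ?_⟩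
        rw [hfu, hfeval z]
        have hp1 : 0 ≤ (cA F hF - z 0) * (-(c0 + c1)) :=
          mul_nonneg (by linarith) (by linarith)
        have hp2 : 0 ≤ (z 1 - z 0 + cD F hF) * c1 :=
          mul_nonneg (by linarith) (by linarith)
        nlinarith [hp1, hp2]
    · -- z 1 = y 1
      have hz1 : z 1 = y 1 := he1
      refine ⟨y, hyC, ?_⟩
      rw [hfeval y, hfeval z]
      nlinarith [mul_nonneg (sub_nonneg.2 hz0y) (neg_nonneg.2 hc0n)]
  · -- c0 > 0, c1 ≤ 0
    rcases min_cases (t + x 0) (y 0) with ⟨he0, hle0⟩ | ⟨he0, _⟩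
    · -- z 0 = t + x 0
      have hz0 : z 0 = t + x 0 := he0
      rcases le_or_gt 0 (c0 + c1) with hcs | hcs
      · refine ⟨x, hxC, ?_⟩
        rw [hfeval x, hfeval z]
        nlinarith [mul_nonneg (sub_nonneg.2 (show z 1 - x 1 ≤ t by linarith)) (neg_nonneg.2 hc1n),
          mul_nonneg ht (le_of_lt hc0p), mul_nonneg ht (show (0:ℝ) ≤ c0 + c1 from hcs)]
      · refine ⟨vstar F hF, hvC, ?_⟩
        rw [hfv, hfeval z]
        have hp1 : 0 ≤ (cB F hF - z 1) * (-(c0 + c1)) :=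
          mul_nonneg (by linarith) (by linarith)
        have hp2 : 0 ≤ (z 0 - z 1 + cD' F hF) * c0 :=
          mul_nonneg (by linarith) (by linarith)
        nlinarith [hp1, hp2]
    · -- z 0 = y 0
      have hz0 : z 0 = y 0 := he0
      refine ⟨y, hyC, ?_⟩
      rw [hfeval y, hfeval z]
      nlinarith [mul_nonneg (sub_nonneg.2 hz1y) (neg_nonneg.2 hc1n)]
  · -- c0 > 0, c1 > 0 : take b = g
    refine ⟨g, hgC, ?_⟩
    rw [hfeval g, hfeval z]
    nlinarith [mul_nonneg (sub_nonneg.2 hgz0) (le_of_lt hc0p),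
      mul_nonneg (sub_nonneg.2 hgz1) (le_of_lt hc1p)]

lemma convSpan_tropConvex : TropConvex (convexHull ℝ (spanF F hF)) := by
  intro x hx y hy a b hab
  obtain ⟨ha, hb⟩ := min_eq_zero_nonneg hab
  rcases min_cases a b with ⟨hab', _⟩ | ⟨hab', _⟩
  · -- a ≤ b, a = 0
    have ha0 : a = 0 := by rw [← hab, hab']
    have := key_min_mem F hF y hy x hx b hb
    have heq : (fun j => min (b + y j) (x j)) = (fun i => min (a + x i) (b + y i)) := by
      funext j
      rw [ha0, zero_add, min_comm]
    rw [heq] at this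
    exact this
  · -- b < a, b = 0
    have hb0 : b = 0 := by rw [← hab, hab']
    have := key_min_mem F hF x hx y hy a ha
    have heq : (fun j => min (a + x j) (y j)) = (fun i => min (a + x i) (b + y i)) := by
      funext j
      rw [hb0, zero_add]
    rw [heq] at this
    exact this

lemma hullSpan_subset_tconv_hull :
    convexHull ℝ (spanF F hF) ⊆ tconv (convexHull ℝ (↑F : Set (Fin 2 → ℝ))) := by
  classical
  intro p hp
  rw [_root_.convexHull_eq] at hp
  obtain ⟨ι, tt, w, zf, hw0, hw1, hzf, hcm⟩ := hp
  set W := tconv (convexHull ℝ (↑F : Set (Fin 2 → ℝ))) with hWdef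
  have hWt : TropConvex W := tconv_tropConvex _
  have hVW : convexHull ℝ (↑F : Set (Fin 2 → ℝ)) ⊆ W := subset_tconv _
  have hrep : ∀ i ∈ tt, ∃ (av bv cv : Fin 2 → ℝ) (sa sb : ℝ),
      av ∈ F ∧ bv ∈ F ∧ cv ∈ F ∧ 0 ≤ sa ∧ 0 ≤ sb ∧
      zf i 0 = sa + av 0 ∧ zf i 1 = sb + bv 1 ∧
      sa + av 0 ≤ sb + bv 0 ∧ sb + bv 1 ≤ sa + av 1 ∧
      zf i 0 ≤ cv 0 ∧ zf i 1 ≤ cv 1 := by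
    intro i hi
    obtain ⟨l, hl0, ⟨cv, hcvF, hcv0⟩, hlz⟩ := hzf i hi
    obtain ⟨av, havF, hav⟩ := F.exists_mem_eq_inf' hF (fun v => l v + v 0)
    obtain ⟨bv, hbvF, hbv⟩ := F.exists_mem_eq_inf' hF (fun v => l v + v 1)
    refine ⟨av, bv, cv, l av, l bv, havF, hbvF, hcvF, hl0 av havF, hl0 bv hbvF,
      ?_, ?_, ?_, ?_, ?_, ?_⟩
    · rw [hlz 0, hav]
    · rw [hlz 1, hbv]
    · calc l av + av 0 = F.inf' hF (fun v => l v + v 0) := hav.symm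
        _ ≤ l bv + bv 0 := Finset.inf'_le _ hbvF
    · calc l bv + bv 1 = F.inf' hF (fun v => l v + v 1) := hbv.symm
        _ ≤ l av + av 1 := Finset.inf'_le _ havF
    · calc zf i 0 ≤ l cv + cv 0 := (hlz 0) ▸ Finset.inf'_le _ hcvF
        _ = cv 0 := by rw [hcv0, zero_add]
    · calc zf i 1 ≤ l cv + cv 1 := (hlz 1) ▸ Finset.inf'_le _ hcvF
        _ = cv 1 := by rw [hcv0, zero_add]
  choose! av bv cv sa sb havF hbvF hcvF hsa0 hsb0 h0e h1e h01 h10 hc0 hc1 using hrep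
  set s := ∑ i ∈ tt, w i * sa i with hsdef
  set uu := ∑ i ∈ tt, w i * sb i with huudef
  have hs0 : 0 ≤ s := Finset.sum_nonneg fun i hi => mul_nonneg (hw0 i hi) (hsa0 i hi)
  have huu0 : 0 ≤ uu := Finset.sum_nonneg fun i hi => mul_nonneg (hw0 i hi) (hsb0 i hi)
  set xs := tt.centerMass w (fun i => av i) with hxsdef
  set ys := tt.centerMass w (fun i => bv i) with hysdef
  set cs := tt.centerMass w (fun i => cv i) with hcsdef
  have hsum1 : (0:ℝ) < ∑ i ∈ tt, w i := by rw [hw1]; norm_num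
  have hxsW : xs ∈ W := hVW (Finset.centerMass_mem_convexHull tt hw0 hsum1
      (fun i hi => Finset.mem_coe.mpr (havF i hi)))
  have hysW : ys ∈ W := hVW (Finset.centerMass_mem_convexHull tt hw0 hsum1
      (fun i hi => Finset.mem_coe.mpr (hbvF i hi)))
  have hcsW : cs ∈ W := hVW (Finset.centerMass_mem_convexHull tt hw0 hsum1
      (fun i hi => Finset.mem_coe.mpr (hcvF i hi)))
  have hxsj : ∀ j, xs j = ∑ i ∈ tt, w i * av i j := by
    intro j
    rw [hxsdef, Finset.centerMass_eq_of_sum_1 _ _ hw1, Finset.sum_apply]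
    simp
  have hysj : ∀ j, ys j = ∑ i ∈ tt, w i * bv i j := by
    intro j
    rw [hysdef, Finset.centerMass_eq_of_sum_1 _ _ hw1, Finset.sum_apply]
    simp
  have hcsj : ∀ j, cs j = ∑ i ∈ tt, w i * cv i j := by
    intro j
    rw [hcsdef, Finset.centerMass_eq_of_sum_1 _ _ hw1, Finset.sum_apply]
    simp
  have hpj : ∀ j, p j = ∑ i ∈ tt, w i * zf i j := by
    intro j
    rw [← hcm, Finset.centerMass_eq_of_sum_1 _ _ hw1, Finset.sum_apply]
    simp
  have hp0 : p 0 = s + xs 0 := by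
    rw [hpj 0, hsdef, hxsj 0, ← Finset.sum_add_distrib]
    refine Finset.sum_congr rfl fun i hi => ?_
    rw [h0e i hi]
    ring
  have hp1 : p 1 = uu + ys 1 := by
    rw [hpj 1, huudef, hysj 1, ← Finset.sum_add_distrib]
    refine Finset.sum_congr rfl fun i hi => ?_
    rw [h1e i hi]
    ring
  have hineq0 : s + xs 0 ≤ uu + ys 0 := by
    rw [hsdef, hxsj 0, huudef, hysj 0, ← Finset.sum_add_distrib, ← Finset.sum_add_distrib]
    refine Finset.sum_le_sum fun i hi => ?_
    nlinarith [mul_le_mul_of_nonneg_left (h01 i hi) (hw0 i hi)]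
  have hineq1 : uu + ys 1 ≤ s + xs 1 := by
    rw [hsdef, hxsj 1, huudef, hysj 1, ← Finset.sum_add_distrib, ← Finset.sum_add_distrib]
    refine Finset.sum_le_sum fun i hi => ?_
    nlinarith [mul_le_mul_of_nonneg_left (h10 i hi) (hw0 i hi)]
  have hpc0 : p 0 ≤ cs 0 := by
    rw [hpj 0, hcsj 0]
    exact Finset.sum_le_sum fun i hi => mul_le_mul_of_nonneg_left (hc0 i hi) (hw0 i hi)
  have hpc1 : p 1 ≤ cs 1 := by
    rw [hpj 1, hcsj 1]
    exact Finset.sum_le_sum fun i hi => mul_le_mul_of_nonneg_left (hc1 i hi) (hw0 i hi)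
  set m := min s uu with hmdef
  have hm0 : 0 ≤ m := le_min hs0 huu0
  have hms : m ≤ s := min_le_left _ _
  have hmu : m ≤ uu := min_le_right _ _
  have hq : (fun j => min ((s - m) + xs j) ((uu - m) + ys j)) ∈ W := by
    apply hWt xs hxsW ys hysW (s - m) (uu - m)
    rw [min_sub_sub_right, ← hmdef, sub_self]
  have hfin := hWt _ hq cs hcsW m 0 (min_eq_right hm0)
  have heq : (fun i => min (m + (fun j => min ((s - m) + xs j) ((uu - m) + ys j)) i)
      (0 + cs i)) = p := by
    funext j
    fin_cases j
    · show min (m + min ((s - m) + xs 0) ((uu - m) + ys 0)) (0 + cs 0) = p 0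
      have h1 : (s - m) + xs 0 ≤ (uu - m) + ys 0 := by linarith
      rw [min_eq_left h1]
      have h2 : m + (s - m + xs 0) = s + xs 0 := by ring
      rw [h2, zero_add, min_eq_left (by linarith), hp0]
    · show min (m + min ((s - m) + xs 1) ((uu - m) + ys 1)) (0 + cs 1) = p 1
      have h1 : (uu - m) + ys 1 ≤ (s - m) + xs 1 := by linarith
      rw [min_eq_right h1]
      have h2 : m + (uu - m + ys 1) = uu + ys 1 := by ring
      rw [h2, zero_add, min_eq_left (by linarith), hp1]
  rw [heq] at hfin
  exact hfin

end SpanSection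

end TropAux
theorem tconv_convexHull_comm_finite_R2 (V : Set (Fin 2 → ℝ)) (hV : V.Finite) :
    tconv (convexHull ℝ V) = convexHull ℝ (tconv V) := by
  classical
  rcases V.eq_empty_or_nonempty with rfl | hVne
  · have hemp : TropConvex (∅ : Set (Fin 2 → ℝ)) := fun x hx => absurd hx (Set.notMem_empty x)
    have h1 : tconv (∅ : Set (Fin 2 → ℝ)) = ∅ :=
      Set.eq_empty_of_subset_empty (TropAux.tconv_min hemp (subset_refl _))
    rw [convexHull_empty, h1, convexHull_empty]
  · set F := hV.toFinset with hFdef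
    have hF : F.Nonempty := by rwa [hFdef, Set.Finite.toFinset_nonempty]
    have hFV : (↑F : Set (Fin 2 → ℝ)) = V := hV.coe_toFinset
    have hVs : V ⊆ TropAux.spanF F hF := by
      rw [← hFV]
      exact TropAux.subset_spanF F hF
    have hspan_tconv : TropAux.spanF F hF ⊆ tconv V :=
      TropAux.spanF_subset_tconv F hF (tconv_tropConvex V)
        (by rw [hFV]; exact TropAux.subset_tconv V)
    have htconv_span : tconv V ⊆ TropAux.spanF F hF :=
      TropAux.tconv_min (TropAux.spanF_tropConvex F hF) hVs
    have hts : tconv V = TropAux.spanF F hF := Set.Subset.antisymm htconv_span hspan_tconv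
    apply Set.Subset.antisymm
    · rw [hts]
      exact TropAux.tconv_min (TropAux.convSpan_tropConvex F hF) (convexHull_mono hVs)
    · rw [hts]
      have h2 := TropAux.hullSpan_subset_tconv_hull F hF
      rwa [hFV] at h2
end
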